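/- If a sorting network w of the reverse permutation in S_n is 132-avoiding, then its reversal w^rev is also a 132-avoiding sorting network. -/

import Mathlib

/-- The adjacent transposition `s_a` (1-indexed letter `a`) acting on positions `Fin n`. -/
def adjT (n a : ℕ) : Equiv.Perm (Fin n) :=
  if h : 1 ≤ a ∧ a < n then Equiv.swap ⟨a - 1, by omega⟩ ⟨a, h.2⟩ else 1

/-- The permutation `s_{w_1} ∘ s_{w_2} ∘ ⋯ ∘ s_{w_m}` of a word, transpositions acting on
positions composed from the left (`s_{w_1}` applied first to the identity). -/
def permOfWord (n : ℕ) (w : List ℕ) : Equiv.Perm (Fin n) :=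
  (w.map (adjT n)).prod

/-- The set of inversions of a permutation. -/
def invSet {n : ℕ} (σ : Equiv.Perm (Fin n)) : Set (Fin n × Fin n) :=
  {p | p.1 < p.2 ∧ σ p.2 < σ p.1}

/-- The number of inversions. -/
noncomputable def invNum {n : ℕ} (σ : Equiv.Perm (Fin n)) : ℕ := (invSet σ).ncard

/-- `w` is a reduced word for `σ`: letters in `[n-1]`, the product of the corresponding
adjacent transpositions is `σ`, and the length is `inv σ`. -/
def IsReducedWord (n : ℕ) (σ : Equiv.Perm (Fin n)) (w : List ℕ) : Prop :=
  (∀ a ∈ w, 1 ≤ a ∧ a < n) ∧ permOfWord n w = σ ∧ w.length = invNum σ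

/-- `σ` avoids the pattern 132. -/
def Avoids132 {n : ℕ} (σ : Equiv.Perm (Fin n)) : Prop :=
  ¬ ∃ i1 i2 i3 : Fin n, i1 < i2 ∧ i2 < i3 ∧ σ i1 < σ i3 ∧ σ i3 < σ i2

/-- `σ` avoids the pattern 312. -/
def Avoids312 {n : ℕ} (σ : Equiv.Perm (Fin n)) : Prop :=
  ¬ ∃ i1 i2 i3 : Fin n, i1 < i2 ∧ i2 < i3 ∧ σ i2 < σ i3 ∧ σ i3 < σ i1

/-- The Rothe diagram of `σ` (permutation matrix with 1s at `(σ i, i)`, 0-indexed):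
cells strictly north of the 1 in their column and strictly west of the 1 in their row. -/
def rothe {n : ℕ} (σ : Equiv.Perm (Fin n)) : Set (Fin n × Fin n) :=
  {p | p.1 < σ p.2 ∧ p.2 < σ.symm p.1}

/-- Two cells are adjacent if they share an edge. -/
def adjCell {n : ℕ} (p q : Fin n × Fin n) : Prop :=
  (p.1 = q.1 ∧ ((p.2 : ℕ) + 1 = q.2 ∨ (q.2 : ℕ) + 1 = p.2)) ∨
  (p.2 = q.2 ∧ ((p.1 : ℕ) + 1 = q.1 ∨ (q.1 : ℕ) + 1 = p.1))

/-- The connected component of the Rothe diagram containing the (0-indexed) cell `(0,0)`,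
empty if `(0,0)` is not in the diagram. -/
def comp11 {n : ℕ} (σ : Equiv.Perm (Fin n)) : Set (Fin n × Fin n) :=
  {p | ∃ h0 : 0 < n,
    Relation.ReflTransGen (fun a b => a ∈ rothe σ ∧ b ∈ rothe σ ∧ adjCell a b)
      (⟨⟨0, h0⟩, ⟨0, h0⟩⟩) p ∧
    p ∈ rothe σ ∧ ((⟨⟨0, h0⟩, ⟨0, h0⟩⟩ : Fin n × Fin n)) ∈ rothe σ}

/-- Edelman–Greene insertion of `x` into a single (strictly increasing) row:
returns the new row and the optional entry bumped into the next row. -/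
def insRow (x : ℕ) : List ℕ → List ℕ × Option ℕ
  | [] => ([x], none)
  | z :: zs =>
    if z < x then
      let r := insRow x zs
      (z :: r.1, r.2)
    else if z = x then (z :: zs, some (z + 1))
    else (x :: zs, some z)

/-- Edelman–Greene insertion of `x` into a tableau (list of rows). -/
def insTab (x : ℕ) : List (List ℕ) → List (List ℕ)
  | [] => [[x]]
  | r :: rs =>
    let p := insRow x r
    match p.2 with
    | none => p.1 :: rs
    | some y => p.1 :: insTab y rs

/-- The Edelman–Greene insertion tableau `P(w)`. -/
def Ptab (w : List ℕ) : List (List ℕ) := w.foldl (fun t x => insTab x t) []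

/-- Add the label `k` to the recording tableau `q` at the unique new cell of shape `p`. -/
def recordCell (k : ℕ) : List (List ℕ) → List (List ℕ) → List (List ℕ)
  | _, [] => []
  | [], _ :: _ => [[k]]
  | q :: qs, p :: ps =>
    if q.length < p.length then (q ++ [k]) :: qs else q :: recordCell k qs ps

/-- The Edelman–Greene recording tableau `Q(w) = EG(w)`. -/
def Qtab (w : List ℕ) : List (List ℕ) :=
  (w.foldl (fun pq x =>
      let P' := insTab x pq.1
      (P', recordCell (pq.2.flatten.length + 1) pq.2 P'))
    (([], []) : List (List ℕ) × List (List ℕ))).2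

/-- A tableau is frozen if the cell in (0-indexed) row `i`, column `j` contains `i + j + 1`. -/
def Frozen (P : List (List ℕ)) : Prop :=
  ∀ i j, i < P.length → j < (P.getD i []).length → (P.getD i []).getD j 0 = i + j + 1

/-- All rows strictly increasing. -/
def RowStrict (P : List (List ℕ)) : Prop := ∀ r ∈ P, List.Pairwise (· < ·) r

/-- All columns strictly increasing. -/
def ColStrict (P : List (List ℕ)) : Prop :=
  ∀ i j, i + 1 < P.length → j < (P.getD (i + 1) []).length →
    (P.getD i []).getD j 0 < (P.getD (i + 1) []).getD j 0

/-- Valid Young-diagram shape: nonempty rows of weakly decreasing lengths. -/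
def TabShape (P : List (List ℕ)) : Prop :=
  (∀ r ∈ P, r ≠ []) ∧ ∀ i, i + 1 < P.length → (P.getD (i + 1) []).length ≤ (P.getD i []).length

/-- The reading word: rows left to right, from the bottom row up. -/
def readingWord (P : List (List ℕ)) : List ℕ := P.reverse.flatten

/-- A standard Young tableau: valid shape, strictly increasing rows and columns, and the
entries are `1, …, N` each exactly once. -/
def IsStandard (Q : List (List ℕ)) : Prop :=
  TabShape Q ∧ RowStrict Q ∧ ColStrict Q ∧ Q.flatten.Perm (List.range' 1 Q.flatten.length)

/-- `Q` has the staircase shape `sc_n = (n-1, n-2, …, 1)`. -/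
def StaircaseShape (n : ℕ) (Q : List (List ℕ)) : Prop :=
  Q.length = n - 1 ∧ ∀ i, i < n - 1 → (Q.getD i []).length = n - 1 - i

/-- A sorting network: a reduced word of the reverse permutation in `S_n`. -/
def IsSortingNetwork (n : ℕ) (w : List ℕ) : Prop :=
  IsReducedWord n Fin.revPerm w

/-- Every intermediate permutation of the word avoids 132. -/
def Avoiding132 (n : ℕ) (w : List ℕ) : Prop :=
  ∀ k, k ≤ w.length → Avoids132 (permOfWord n (w.take k))

/-- Every intermediate permutation of the word avoids 312. -/
def Avoiding312 (n : ℕ) (w : List ℕ) : Prop :=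
  ∀ k, k ≤ w.length → Avoids312 (permOfWord n (w.take k))

/-- `c` is the column word of `Q`: its `k`-th letter (1-indexed) is the (1-indexed) column
of the entry `k` in `Q`. -/
def IsColumnWord (Q : List (List ℕ)) (c : List ℕ) : Prop :=
  c.length = Q.flatten.length ∧
  ∀ k, k < c.length → ∃ i j, i < Q.length ∧ j < (Q.getD i []).length ∧
    (Q.getD i []).getD j 0 = k + 1 ∧ c.getD k 0 = j + 1

/-- All anti-diagonals of `Q` increase downwards: `Q_{i,j} > Q_{i-1,j+1}` (1-indexed). -/
def AntiDiagDown (Q : List (List ℕ)) : Prop :=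
  ∀ i j, i + 1 < Q.length → j < (Q.getD (i + 1) []).length → j + 1 < (Q.getD i []).length →
    (Q.getD i []).getD (j + 1) 0 < (Q.getD (i + 1) []).getD j 0

section AuxProofs

lemma adjT_inv (n a : ℕ) : (adjT n a)⁻¹ = adjT n a := by
  unfold adjT; split
  · simp
  · simp

lemma adjT_eq_swap {n a : ℕ} (ha : 1 ≤ a) (ha' : a < n) :
    adjT n a = Equiv.swap ⟨a - 1, by omega⟩ ⟨a, ha'⟩ := by
  unfold adjT; rw [dif_pos ⟨ha, ha'⟩]

lemma permOfWord_append (n : ℕ) (u v : List ℕ) :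
    permOfWord n (u ++ v) = permOfWord n u * permOfWord n v := by
  simp [permOfWord]

lemma permOfWord_reverse (n : ℕ) (w : List ℕ) :
    permOfWord n w.reverse = (permOfWord n w)⁻¹ := by
  unfold permOfWord
  rw [List.map_reverse, List.prod_reverse_noncomm, List.map_map]
  simp [Function.comp_def, adjT_inv]

lemma invNum_one (n : ℕ) : invNum (1 : Equiv.Perm (Fin n)) = 0 := by
  have : invSet (1 : Equiv.Perm (Fin n)) = ∅ := by
    ext p
    simp only [invSet, Set.mem_setOf_eq, Equiv.Perm.one_apply, Set.mem_empty_iff_false,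
      iff_false, not_and]
    intro h h'
    exact absurd h' h.asymm
  rw [invNum, this, Set.ncard_empty]

lemma swap_lt_swap {n : ℕ} (p q : Fin n) (hpq : (p : ℕ) + 1 = (q : ℕ))
    {i j : Fin n} (hij : i < j) (hne : ¬(i = p ∧ j = q)) :
    Equiv.swap p q i < Equiv.swap p q j := by
  have hij' : (i : ℕ) < (j : ℕ) := hij
  by_cases hip : i = p
  · have hjq : j ≠ q := fun h => hne ⟨hip, h⟩
    have hjp : j ≠ p := by subst hip; exact hij.ne'
    rw [hip, Equiv.swap_apply_left, Equiv.swap_apply_of_ne_of_ne hjp hjq]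
    have : (q : ℕ) < (j : ℕ) := by
      have := Fin.val_ne_of_ne hjq
      have := hip ▸ hij'
      omega
    exact this
  · by_cases hiq : i = q
    · have hjp : j ≠ p := by
        intro h
        have := Fin.val_ne_of_ne (hip : i ≠ p)
        have : (i : ℕ) < (p : ℕ) + 1 := by rw [hpq, ← hiq]; omega
        omega
      have hjq : j ≠ q := by subst hiq; exact hij.ne'
      rw [hiq, Equiv.swap_apply_right, Equiv.swap_apply_of_ne_of_ne hjp hjq]
      show (p : ℕ) < (j : ℕ)
      have := hiq ▸ hij'
      omega
    · rw [Equiv.swap_apply_of_ne_of_ne hip hiq]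
      by_cases hjp : j = p
      · rw [hjp, Equiv.swap_apply_left]
        show (i : ℕ) < (q : ℕ)
        have := hjp ▸ hij'
        omega
      · by_cases hjq : j = q
        · rw [hjq, Equiv.swap_apply_right]
          show (i : ℕ) < (p : ℕ)
          have := hjq ▸ hij'
          have h1 := Fin.val_ne_of_ne hip
          have h2 := Fin.val_ne_of_ne hiq
          omega
        · rw [Equiv.swap_apply_of_ne_of_ne hjp hjq]; exact hij

lemma invNum_mul_adjT {n a : ℕ} (σ : Equiv.Perm (Fin n)) (ha : 1 ≤ a) (ha' : a < n)
    (hasc : σ ⟨a - 1, by omega⟩ < σ ⟨a, ha'⟩) :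
    invNum (σ * adjT n a) = invNum σ + 1 := by
  set p : Fin n := ⟨a - 1, by omega⟩ with hp
  set q : Fin n := ⟨a, ha'⟩ with hq
  have hpq : (p : ℕ) + 1 = (q : ℕ) := by simp [hp, hq]; omega
  have hplq : p < q := by
    show (p : ℕ) < (q : ℕ); omega
  rw [adjT_eq_swap ha ha']
  set s := Equiv.swap p q with hs
  have hss : ∀ x : Fin n, s (s x) = x := fun x => Equiv.swap_apply_self p q x
  set e : Fin n × Fin n → Fin n × Fin n := Prod.map s s with he
  have hee : ∀ x, e (e x) = x := by
    rintro ⟨x, y⟩; simp [he, hss]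
  have heinj : Function.Injective e :=
    Function.Injective.prodMap (Equiv.injective s) (Equiv.injective s)
  have hset : invSet (σ * s) = insert (p, q) (e '' invSet σ) := by
    ext ⟨i, j⟩
    simp only [invSet, Set.mem_setOf_eq, Set.mem_insert_iff, Set.mem_image,
      Equiv.Perm.mul_apply]
    constructor
    · rintro ⟨h1, h2⟩
      by_cases hc : (i, j) = (p, q)
      · exact Or.inl hc
      · right
        refine ⟨(s i, s j), ⟨?_, ?_⟩, ?_⟩
        · refine swap_lt_swap p q hpq h1 ?_
          intro ⟨hi, hj⟩; exact hc (by rw [hi, hj])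
        · exact h2
        · simp [he, hss]
    · rintro (hc | ⟨⟨x, y⟩, ⟨hxy1, hxy2⟩, hxyel⟩)
      · rw [Prod.ext_iff] at hc
        obtain ⟨hi, hj⟩ := hc
        subst hi; subst hj
        refine ⟨hplq, ?_⟩
        rw [Equiv.swap_apply_left, Equiv.swap_apply_right]
        exact hasc
      · have hxy : (x, y) ≠ (p, q) := by
          rintro h
          rw [Prod.ext_iff] at h
          obtain ⟨hx, hy⟩ := h
          subst hx; subst hy
          exact absurd hasc hxy2.asymm
        have hij : (i, j) = (s x, s y) := hxyel.symm ▸ rfl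
        rw [Prod.ext_iff] at hij
        obtain ⟨hi, hj⟩ := hij
        subst hi; subst hj
        refine ⟨swap_lt_swap p q hpq hxy1 (fun ⟨h1, h2⟩ => hxy (by rw [h1, h2])), ?_⟩
        rwa [hss, hss]
  have hnotmem : (p, q) ∉ e '' invSet σ := by
    rintro ⟨⟨x, y⟩, ⟨hxy1, hxy2⟩, hel⟩
    rw [Prod.ext_iff] at hel
    obtain ⟨h1, h2⟩ := hel
    simp only [he, Prod.map_fst, Prod.map_snd] at h1 h2
    have hx : x = q := by
      have := congrArg s h1; rwa [hss, Equiv.swap_apply_left] at this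
    have hy : y = p := by
      have := congrArg s h2; rwa [hss, Equiv.swap_apply_right] at this
    subst hx; subst hy
    exact absurd hxy1 hplq.asymm
  rw [invNum, invNum, hset, Set.ncard_insert_of_notMem hnotmem (Set.toFinite _),
    Set.ncard_image_of_injective _ heinj]

lemma adjT_mul_self' {n a : ℕ} : adjT n a * adjT n a = 1 := by
  unfold adjT; split
  · exact Equiv.swap_mul_self _ _
  · simp

lemma invNum_mul_adjT' {n a : ℕ} (σ : Equiv.Perm (Fin n)) (ha : 1 ≤ a) (ha' : a < n)
    (hdesc : σ ⟨a, ha'⟩ < σ ⟨a - 1, by omega⟩) :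
    invNum (σ * adjT n a) + 1 = invNum σ := by
  set σ' := σ * adjT n a with hσ'
  have h1 : σ' ⟨a - 1, by omega⟩ < σ' ⟨a, ha'⟩ := by
    rw [hσ', adjT_eq_swap ha ha']
    simp only [Equiv.Perm.mul_apply, Equiv.swap_apply_left, Equiv.swap_apply_right]
    exact hdesc
  have h2 := invNum_mul_adjT σ' ha ha' h1
  rw [hσ', mul_assoc, adjT_mul_self', mul_one] at h2
  rw [← h2]


lemma reduced_ascent (n : ℕ) (σ : Equiv.Perm (Fin n)) (w : List ℕ)
    (h : IsReducedWord n σ w) (k : ℕ) (hk : k < w.length)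
    (ha' : w[k] < n) :
    permOfWord n (w.take k) ⟨w[k] - 1, by omega⟩ <
      permOfWord n (w.take k) ⟨w[k], ha'⟩ := by
  obtain ⟨hlet, hperm, hlen⟩ := h
  obtain ⟨hb1, hb2⟩ := hlet _ (List.getElem_mem hk)
  set d : ℕ → ℕ := fun j => invNum (permOfWord n (w.take j)) with hd
  have htake : ∀ j, (hj : j < w.length) → w.take (j+1) = w.take j ++ [w[j]'hj] := by
    intro j hj
    rw [List.take_succ, List.getElem?_eq_getElem hj]
    rfl
  have hpw : ∀ j, (hj : j < w.length) →
      permOfWord n (w.take (j+1)) = permOfWord n (w.take j) * adjT n (w[j]'hj) := by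
    intro j hj
    rw [htake j hj, permOfWord_append]
    congr 1
  have hstep : ∀ j, (hj : j < w.length) → d (j+1) ≤ d j + 1 := by
    intro j hj
    obtain ⟨h1, h2⟩ := hlet _ (List.getElem_mem hj)
    simp only [hd]
    rw [hpw j hj]
    rcases lt_trichotomy (permOfWord n (w.take j) ⟨w[j] - 1, by omega⟩)
        (permOfWord n (w.take j) ⟨w[j], h2⟩) with hlt | heq | hgt
    · rw [invNum_mul_adjT _ h1 h2 hlt]
    · exfalso
      have h' := (permOfWord n (w.take j)).injective heq
      rw [Fin.mk.injEq] at h'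
      omega
    · have := invNum_mul_adjT' _ h1 h2 hgt
      omega
  have hchain : ∀ t j, j + t ≤ w.length → d (j + t) ≤ d j + t := by
    intro t
    induction t with
    | zero => intro j _; simp
    | succ t iht =>
      intro j hjt
      have h1 : j + t < w.length := by omega
      have h2 := hstep (j + t) h1
      have h3 := iht j (by omega)
      have e : j + (t + 1) = (j + t) + 1 := rfl
      rw [e]
      omega
  have hd0 : d 0 = 0 := by
    simp only [hd, List.take_zero]
    have : permOfWord n ([] : List ℕ) = 1 := rfl
    rw [this, invNum_one]
  have hdm : d w.length = w.length := by
    simp only [hd, List.take_length, hperm]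
    exact hlen.symm
  by_contra hcon
  have hne : permOfWord n (w.take k) ⟨w[k] - 1, by omega⟩ ≠
      permOfWord n (w.take k) ⟨w[k], ha'⟩ := by
    intro heq
    have h' := (permOfWord n (w.take k)).injective heq
    rw [Fin.mk.injEq] at h'
    omega
  have hgt : permOfWord n (w.take k) ⟨w[k], ha'⟩ <
      permOfWord n (w.take k) ⟨w[k] - 1, by omega⟩ := hne.lt_or_gt.resolve_left hcon
  have hdk : d (k+1) + 1 = d k := by
    simp only [hd]
    rw [hpw k hk]
    exact invNum_mul_adjT' _ hb1 ha' hgt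
  have hc1 : d k ≤ d 0 + k := by
    have := hchain k 0 (by omega)
    rwa [Nat.zero_add] at this
  have hc2 : d w.length ≤ d (k+1) + (w.length - (k+1)) := by
    have := hchain (w.length - (k+1)) (k+1) (by omega)
    have e : (k+1) + (w.length - (k+1)) = w.length := by omega
    rwa [e] at this
  omega

lemma avoid312_step {n a : ℕ} (σ : Equiv.Perm (Fin n)) (ha : 1 ≤ a) (ha' : a < n)
    (hasc : σ ⟨a - 1, by omega⟩ < σ ⟨a, ha'⟩)
    (h132 : Avoids132 σ) (h312 : Avoids312 σ) :
    Avoids312 (σ * adjT n a) := by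
  set p : Fin n := ⟨a - 1, by omega⟩ with hp
  set q : Fin n := ⟨a, ha'⟩ with hq
  rw [adjT_eq_swap ha ha', ← hp, ← hq]
  rintro ⟨i1, i2, i3, h12, h23, hA, hB⟩
  have hpv : (p : ℕ) = a - 1 := rfl
  have hqv : (q : ℕ) = a := rfl
  have hs : ∀ x : Fin n, x ≠ p → x ≠ q → (σ * Equiv.swap p q) x = σ x := by
    intro x h1 h2
    simp [Equiv.Perm.mul_apply, Equiv.swap_apply_of_ne_of_ne h1 h2]
  have hsp : (σ * Equiv.swap p q) p = σ q := by
    simp [Equiv.Perm.mul_apply]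
  have hsq : (σ * Equiv.swap p q) q = σ p := by
    simp [Equiv.Perm.mul_apply]
  have h12' : (i1 : ℕ) < i2 := h12
  have h23' : (i2 : ℕ) < i3 := h23
  have hne : ∀ x y : Fin n, (x : ℕ) ≠ (y : ℕ) → x ≠ y :=
    fun x y h hxy => h (by rw [hxy])
  by_cases h1p : i1 = p
  · have e1 : (i1 : ℕ) = a - 1 := by rw [h1p]
    by_cases h2q : i2 = q
    · have e2 : (i2 : ℕ) = a := by rw [h2q]
      have h3p : i3 ≠ p := hne _ _ (by omega)
      have h3q : i3 ≠ q := hne _ _ (by omega)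
      refine h132 ⟨p, q, i3, ?_, ?_, ?_, ?_⟩
      · show (p : ℕ) < (q : ℕ); omega
      · show (q : ℕ) < (i3 : ℕ); omega
      · rw [h2q] at hA; rwa [hsq, hs i3 h3p h3q] at hA
      · rw [h1p] at hB; rwa [hsp, hs i3 h3p h3q] at hB
    · have e2 : (i2 : ℕ) ≠ a := fun h => h2q (Fin.ext h)
      have h2p : i2 ≠ p := hne _ _ (by omega)
      have h3p : i3 ≠ p := hne _ _ (by omega)
      have h3q : i3 ≠ q := hne _ _ (by omega)
      refine h312 ⟨q, i2, i3, ?_, h23, ?_, ?_⟩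
      · show (q : ℕ) < (i2 : ℕ); omega
      · rwa [hs i2 h2p h2q, hs i3 h3p h3q] at hA
      · rw [h1p] at hB; rwa [hsp, hs i3 h3p h3q] at hB
  · have e1 : (i1 : ℕ) ≠ a - 1 := fun h => h1p (Fin.ext h)
    by_cases h1q : i1 = q
    · have e1' : (i1 : ℕ) = a := by rw [h1q]
      have h2p : i2 ≠ p := hne _ _ (by omega)
      have h2q : i2 ≠ q := hne _ _ (by omega)
      have h3p : i3 ≠ p := hne _ _ (by omega)
      have h3q : i3 ≠ q := hne _ _ (by omega)
      refine h312 ⟨p, i2, i3, ?_, h23, ?_, ?_⟩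
      · show (p : ℕ) < (i2 : ℕ); omega
      · rwa [hs i2 h2p h2q, hs i3 h3p h3q] at hA
      · rw [h1q] at hB; rwa [hsq, hs i3 h3p h3q] at hB
    · have e1' : (i1 : ℕ) ≠ a := fun h => h1q (Fin.ext h)
      by_cases h2p : i2 = p
      · have e2 : (i2 : ℕ) = a - 1 := by rw [h2p]
        by_cases h3q : i3 = q
        · rw [h2p, h3q] at hA
          rw [hsp, hsq] at hA
          exact absurd hA hasc.asymm
        · have e3 : (i3 : ℕ) ≠ a := fun h => h3q (Fin.ext h)
          have h3p : i3 ≠ p := hne _ _ (by omega)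
          have h1p' : i1 ≠ p := h1p
          have h1q' : i1 ≠ q := h1q
          refine h312 ⟨i1, q, i3, ?_, ?_, ?_, ?_⟩
          · show (i1 : ℕ) < (q : ℕ); omega
          · show (q : ℕ) < (i3 : ℕ); omega
          · rw [h2p] at hA; rwa [hsp, hs i3 h3p h3q] at hA
          · rwa [hs i1 h1p h1q, hs i3 h3p h3q] at hB
      · have e2 : (i2 : ℕ) ≠ a - 1 := fun h => h2p (Fin.ext h)
        by_cases h2q : i2 = q
        · have e2' : (i2 : ℕ) = a := by rw [h2q]
          have h3p : i3 ≠ p := hne _ _ (by omega)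
          have h3q : i3 ≠ q := hne _ _ (by omega)
          refine h312 ⟨i1, p, i3, ?_, ?_, ?_, ?_⟩
          · show (i1 : ℕ) < (p : ℕ); omega
          · show (p : ℕ) < (i3 : ℕ); omega
          · rw [h2q] at hA; rwa [hsq, hs i3 h3p h3q] at hA
          · rwa [hs i1 h1p h1q, hs i3 h3p h3q] at hB
        · have e2' : (i2 : ℕ) ≠ a := fun h => h2q (Fin.ext h)
          by_cases h3p : i3 = p
          · have e3 : (i3 : ℕ) = a - 1 := by rw [h3p]
            refine h312 ⟨i1, i2, q, ?_, ?_, ?_, ?_⟩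
            · exact h12
            · show (i2 : ℕ) < (q : ℕ); omega
            · rw [h3p] at hA; rwa [hs i2 h2p h2q, hsp] at hA
            · rw [h3p] at hB; rwa [hsp, hs i1 h1p h1q] at hB
          · have e3 : (i3 : ℕ) ≠ a - 1 := fun h => h3p (Fin.ext h)
            by_cases h3q : i3 = q
            · have e3' : (i3 : ℕ) = a := by rw [h3q]
              refine h312 ⟨i1, i2, p, ?_, ?_, ?_, ?_⟩
              · exact h12
              · show (i2 : ℕ) < (p : ℕ); omega
              · rw [h3q] at hA; rwa [hs i2 h2p h2q, hsq] at hA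
              · rw [h3q] at hB; rwa [hsq, hs i1 h1p h1q] at hB
            · refine h312 ⟨i1, i2, i3, h12, h23, ?_, ?_⟩
              · rwa [hs i2 h2p h2q, hs i3 h3p h3q] at hA
              · rwa [hs i1 h1p h1q, hs i3 h3p h3q] at hB

lemma avoids312_one (n : ℕ) : Avoids312 (1 : Equiv.Perm (Fin n)) := by
  rintro ⟨i1, i2, i3, h12, h23, hA, hB⟩
  exact absurd hB (h12.trans h23).asymm

lemma prefix_avoids312 (n : ℕ) (w : List ℕ) (hw : IsSortingNetwork n w)
    (h132 : Avoiding132 n w) : Avoiding312 n w := by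
  intro k
  induction k with
  | zero =>
    intro _
    have h1 : w.take 0 = [] := rfl
    have h2 : permOfWord n ([] : List ℕ) = 1 := rfl
    rw [h1, h2]
    exact avoids312_one n
  | succ k ih =>
    intro hk
    have hk' : k < w.length := hk
    obtain ⟨h1, h2⟩ := hw.1 _ (List.getElem_mem hk')
    have htake : w.take (k+1) = w.take k ++ [w[k]] := by
      rw [List.take_succ, List.getElem?_eq_getElem hk']
      rfl
    have hpw : permOfWord n (w.take (k+1)) = permOfWord n (w.take k) * adjT n w[k] := by
      rw [htake, permOfWord_append]
      congr 1
    rw [hpw]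
    exact avoid312_step _ h1 h2 (reduced_ascent n _ w hw k hk' h2) (h132 k hk'.le) (ih hk'.le)

end AuxProofs

/-- the reversal of a 132-avoiding sorting network is again a 132-avoiding
sorting network. -/
theorem reverse_avoiding132_sn (n : ℕ) (w : List ℕ)
    (hw : IsSortingNetwork n w) (h132 : Avoiding132 n w) :
    IsSortingNetwork n w.reverse ∧ Avoiding132 n w.reverse := by
  obtain ⟨hlet, hperm, hlen⟩ := hw
  have hrevinv : (Fin.revPerm : Equiv.Perm (Fin n))⁻¹ = Fin.revPerm := by
    rw [Equiv.Perm.inv_def, Fin.revPerm_symm]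
  have h312 := prefix_avoids312 n w ⟨hlet, hperm, hlen⟩ h132
  constructor
  · refine ⟨?_, ?_, ?_⟩
    · intro a hamem
      exact hlet a (List.mem_reverse.mp hamem)
    · rw [permOfWord_reverse, hperm, hrevinv]
    · rw [List.length_reverse]
      exact hlen
  · intro k hk
    rw [List.length_reverse] at hk
    set j := w.length - k with hj
    have htk : w.reverse.take k = (w.drop j).reverse := by
      rw [List.take_reverse]
    have hsplit : permOfWord n w = permOfWord n (w.take j) * permOfWord n (w.drop j) := by
      rw [← permOfWord_append, List.take_append_drop]
    have hτ : permOfWord n (w.reverse.take k) = Fin.revPerm * permOfWord n (w.take j) := by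
      rw [htk, permOfWord_reverse]
      have hdrop : permOfWord n (w.drop j) = (permOfWord n (w.take j))⁻¹ * Fin.revPerm := by
        rw [← hperm, hsplit]
        group
      rw [hdrop, mul_inv_rev, inv_inv, hrevinv]
    rw [hτ]
    have h3 := h312 j (Nat.sub_le _ _)
    rintro ⟨i1, i2, i3, h12, h23, hA, hB⟩
    simp only [Equiv.Perm.mul_apply, Fin.revPerm_apply] at hA hB
    rw [Fin.rev_lt_rev] at hA hB
    exact h3 ⟨i1, i2, i3, h12, h23, hB, hA⟩
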